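/- Let Q be a set of integers ≥ 2 such that for all q, r ∈ Q, log_q r is rational. If Q is finite then there exists an integer b ≥ 2 such that every element of Q is a power of b. -/

import Mathlib

lemma ratlog (q r : ℕ) (hq : 2 ≤ q) (hr : 2 ≤ r) (s : ℚ)
    (hs : Real.log r / Real.log q = (s : ℝ)) :
    ∃ a c : ℕ, 0 < a ∧ 0 < c ∧ q ^ a = r ^ c := by
  have hq1 : (1:ℝ) < q := by exact_mod_cast hq.trans_lt' one_lt_two
  have hr1 : (1:ℝ) < r := by exact_mod_cast hr.trans_lt' one_lt_two
  have hlq : 0 < Real.log q := Real.log_pos hq1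
  have hlr : 0 < Real.log r := Real.log_pos hr1
  have hspos : (0:ℝ) < s := hs ▸ div_pos hlr hlq
  have hsq : (0:ℚ) < s := by exact_mod_cast hspos
  have hnum : 0 < s.num := Rat.num_pos.2 hsq
  refine ⟨s.num.toNat, s.den, by omega, s.pos, ?_⟩
  have heq : Real.log r = s * Real.log q := by
    field_simp at hs; linarith
  have : (s.den : ℝ) * Real.log r = (s.num.toNat : ℝ) * Real.log q := by
    have hcast : (s:ℝ) = (s.num.toNat : ℝ) / (s.den : ℝ) := by
      rw [Rat.cast_def]; congr 1
      exact_mod_cast (Int.toNat_of_nonneg hnum.le).symm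
    rw [heq, hcast]
    field_simp
  have hlog : Real.log ((q:ℝ) ^ s.num.toNat) = Real.log ((r:ℝ) ^ s.den) := by
    rw [Real.log_pow, Real.log_pow]; linarith
  have hpos1 : (0:ℝ) < (q:ℝ) ^ s.num.toNat := by positivity
  have hpos2 : (0:ℝ) < (r:ℝ) ^ s.den := by positivity
  have := Real.log_injOn_pos (Set.mem_Ioi.2 hpos1) (Set.mem_Ioi.2 hpos2) hlog
  exact_mod_cast this

lemma common_base (q r : ℕ) (hq : 2 ≤ q) (hr : 2 ≤ r) (a c : ℕ)
    (ha : 0 < a) (hc : 0 < c) (heq : q ^ a = r ^ c) :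
    ∃ b u v : ℕ, 2 ≤ b ∧ q = b ^ u ∧ r = b ^ v := by
  set g := Nat.gcd a c with hg
  have hg0 : 0 < g := Nat.gcd_pos_of_pos_left _ ha
  set a' := a / g with ha'
  set c' := c / g with hc'
  have haa : a = g * a' := (Nat.mul_div_cancel' (Nat.gcd_dvd_left a c) ).symm
  have hcc : c = g * c' := (Nat.mul_div_cancel' (Nat.gcd_dvd_right a c)).symm
  have hcop : Nat.Coprime a' c' := Nat.coprime_div_gcd_div_gcd hg0
  have heq' : q ^ a' = r ^ c' := by
    apply Nat.pow_left_injective (n := g) hg0.ne'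
    show (q ^ a') ^ g = (r ^ c') ^ g
    rw [← pow_mul, ← pow_mul, mul_comm a' g, mul_comm c' g, ← haa, ← hcc, heq]
  -- move to ℚ and use pow_eq_pow_iff_of_coprime
  have ha'0 : 0 < a' := by
    rcases Nat.eq_zero_or_pos a' with h0 | h0
    · rw [h0, mul_zero] at haa; omega
    · exact h0
  have hc'0 : 0 < c' := by
    rcases Nat.eq_zero_or_pos c' with h0 | h0
    · rw [h0, mul_zero] at hcc; omega
    · exact h0
  have hQeq : ((q:ℚ)) ^ a' = (r:ℚ) ^ c' := by exact_mod_cast heq'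
  obtain ⟨x, hx1, hx2⟩ := (pow_eq_pow_iff_of_coprime hcop).1 hQeq
  set y : ℚ := |x| with hy
  have hy1 : (q:ℚ) = y ^ c' := by
    have : |(q:ℚ)| = |x ^ c'| := by rw [hx1]
    rwa [abs_pow, abs_of_nonneg (by positivity : (0:ℚ) ≤ (q:ℚ))] at this
  have hy2 : (r:ℚ) = y ^ a' := by
    have : |(r:ℚ)| = |x ^ a'| := by rw [hx2]
    rwa [abs_pow, abs_of_nonneg (by positivity : (0:ℚ) ≤ (r:ℚ))] at this
  have hyden : y.den = 1 := by
    have h1 : (y ^ c').den = 1 := by rw [← hy1]; exact Rat.den_natCast q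
    rw [Rat.den_pow] at h1
    exact (pow_eq_one_iff.1 h1).resolve_right hc'0.ne'
  have hynum : 0 ≤ y.num := Rat.num_nonneg.2 (abs_nonneg x)
  set n : ℕ := y.num.toNat with hn
  have hyn : y = (n : ℚ) := by
    have h2 : y = (y.num : ℚ) := by
      conv_lhs => rw [← Rat.num_div_den y]
      rw [hyden]; simp
    rw [h2, hn]
    exact_mod_cast congrArg (fun z : ℤ => (z : ℚ)) (Int.toNat_of_nonneg hynum).symm
  have hq' : q = n ^ c' := by
    have := hy1; rw [hyn] at this; exact_mod_cast this
  have hr' : r = n ^ a' := by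
    have := hy2; rw [hyn] at this; exact_mod_cast this
  have hn2 : 2 ≤ n := by
    by_contra hle
    push_neg at hle
    have h3 : q ≤ 1 := by
      calc q = n ^ c' := hq'
      _ ≤ 1 ^ c' := Nat.pow_le_pow_left (by omega) _
      _ = 1 := one_pow _
    omega
  exact ⟨n, c', a', hn2, hq', hr'⟩

/-- If `Q` is a finite set of integers `≥ 2` with `log_q r` rational for all `q, r ∈ Q`,
then there is an integer `b ≥ 2` such that every element of `Q` is a power of `b`. -/
theorem stmt8 (Q : Finset ℕ) (hQ : ∀ x ∈ Q, 2 ≤ x)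
    (h : ∀ q ∈ Q, ∀ r ∈ Q, ∃ s : ℚ, Real.log r / Real.log q = (s : ℝ)) :
    ∃ b : ℕ, 2 ≤ b ∧ ∀ x ∈ Q, ∃ n : ℕ, x = b ^ n := by
  classical
  induction Q using Finset.induction_on with
  | empty => exact ⟨2, le_refl 2, by simp⟩
  | @insert x Q' hx ih =>
    have hQ' : ∀ y ∈ Q', 2 ≤ y := fun y hy => hQ y (Finset.mem_insert_of_mem hy)
    have h' : ∀ q ∈ Q', ∀ r ∈ Q', ∃ s : ℚ, Real.log r / Real.log q = (s : ℝ) :=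
      fun q hq r hr => h q (Finset.mem_insert_of_mem hq) r (Finset.mem_insert_of_mem hr)
    obtain ⟨b, hb2, hb⟩ := ih hQ' h'
    have hx2 : 2 ≤ x := hQ x (Finset.mem_insert_self x Q')
    rcases Q'.eq_empty_or_nonempty with rfl | ⟨q0, hq0⟩
    · refine ⟨x, hx2, ?_⟩
      intro y hy
      rcases Finset.mem_insert.1 hy with rfl | hy'
      · exact ⟨1, (pow_one _).symm⟩
      · simp at hy'
    · obtain ⟨s, hs⟩ := h x (Finset.mem_insert_self x Q') q0 (Finset.mem_insert_of_mem hq0)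
      obtain ⟨a, c, ha, hc, heq⟩ := ratlog x q0 hx2 (hQ' q0 hq0) s hs
      obtain ⟨b2, u, v, hb2', hxb2, hq0b2⟩ :=
        common_base x q0 hx2 (hQ' q0 hq0) a c ha hc heq
      obtain ⟨i, hi⟩ := hb q0 hq0
      have hi0 : 0 < i := by
        rcases Nat.eq_zero_or_pos i with h0 | h0
        · rw [h0, pow_zero] at hi; have := hQ' q0 hq0; omega
        · exact h0
      have hv0 : 0 < v := by
        rcases Nat.eq_zero_or_pos v with h0 | h0
        · rw [h0, pow_zero] at hq0b2; have := hQ' q0 hq0; omega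
        · exact h0
      obtain ⟨d, α, β, hd2, hbd, hb2d⟩ :=
        common_base b b2 hb2 hb2' i v hi0 hv0 (by rw [← hi, hq0b2])
      refine ⟨d, hd2, ?_⟩
      intro y hy
      rcases Finset.mem_insert.1 hy with rfl | hy'
      · exact ⟨β * u, by rw [hxb2, hb2d, ← pow_mul]⟩
      · obtain ⟨m, hm⟩ := hb y hy'
        exact ⟨α * m, by rw [hm, hbd, ← pow_mul]⟩
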